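/- Let N ≥ 2, let t_1,…,t_N ≥ 0 with Σ_k t_k = 1 and t_g < 1, and fix α ∈ [1/2, 1) and an index g. Consider maximizing F(π) = Σ_{k : π_k > 0} t_k ln π_k over the simplex {π ∈ ℝ^N : π_k ≥ 0, Σ_k π_k = 1} subject to the additional constraint π_g ≥ α. Then the vector π* defined by π*_g = max(α, t_g) and π*_l = (1 − π*_g)·t_l/(1 − t_g) for l ≠ g is a maximizer of F on this constraint set. -/
import Mathlib


open scoped BigOperators

/-- Objective `F(π) = Σ_{k : π_k > 0} t_k ln π_k`, with value `⊥` (i.e. `-∞`) if some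
component with `t_k > 0` has `π_k = 0` (convention `0 · ln 0 = 0` otherwise, noting
`Real.log 0 = 0`). -/
noncomputable def mixObj {N : ℕ} (t π : Fin N → ℝ) : EReal :=
  if ∃ k, 0 < t k ∧ π k = 0 then ⊥ else ((∑ k, t k * Real.log (π k) : ℝ) : EReal)

/-- M-step solution for the constrained mixture probabilities: the vector with
`π*_g = max α (t_g)` and `π*_l = (1 - π*_g) t_l / (1 - t_g)` for `l ≠ g` is feasible and
maximizes `F` over the simplex intersected with `{π : π_g ≥ α}`. -/
theorem stmt6 {N : ℕ} (hN : 2 ≤ N) (t : Fin N → ℝ) (ht0 : ∀ k, 0 ≤ t k)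
    (ht1 : ∑ k, t k = 1) (g : Fin N) (htg : t g < 1)
    (α : ℝ) (hα0 : 1 / 2 ≤ α) (hα1 : α < 1) :
    let πstar : Fin N → ℝ :=
      fun l => if l = g then max α (t g) else (1 - max α (t g)) * t l / (1 - t g)
    (∀ k, 0 ≤ πstar k) ∧ (∑ k, πstar k = 1) ∧ α ≤ πstar g ∧
      ∀ π : Fin N → ℝ, (∀ k, 0 ≤ π k) → (∑ k, π k = 1) → α ≤ π g →
        mixObj t π ≤ mixObj t πstar := by
  intro πstar
  have hg : πstar g = max α (t g) := if_pos rfl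
  have hl : ∀ k, k ≠ g → πstar k = (1 - max α (t g)) * t k / (1 - t g) :=
    fun k hk => if_neg hk
  set m := max α (t g) with hmdef
  have hα0' : (0:ℝ) < α := by linarith
  have hm0 : 0 < m := lt_of_lt_of_le hα0' (le_max_left _ _)
  have hmα : α ≤ m := le_max_left _ _
  have hm1 : m < 1 := max_lt hα1 htg
  have h1m : 0 < 1 - m := by linarith
  have h1tg : 0 < 1 - t g := by linarith
  have hsumerase : ∑ k ∈ Finset.univ.erase g, t k = 1 - t g := by
    have h := Finset.add_sum_erase Finset.univ t (Finset.mem_univ g)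
    rw [ht1] at h
    linarith
  have hpos : ∀ k, 0 ≤ πstar k := by
    intro k
    by_cases hk : k = g
    · subst hk; rw [hg]; exact hm0.le
    · rw [hl k hk]
      exact div_nonneg (mul_nonneg h1m.le (ht0 k)) h1tg.le
  have hsum : ∑ k, πstar k = 1 := by
    rw [← Finset.add_sum_erase Finset.univ πstar (Finset.mem_univ g), hg]
    have heq : ∑ k ∈ Finset.univ.erase g, πstar k
        = ∑ k ∈ Finset.univ.erase g, (1 - m) / (1 - t g) * t k := by
      refine Finset.sum_congr rfl fun k hk => ?_
      rw [hl k (Finset.mem_erase.1 hk).1]; ring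
    rw [heq, ← Finset.mul_sum, hsumerase, div_mul_cancel₀ _ h1tg.ne']
    ring
  refine ⟨hpos, hsum, by rw [hg]; exact le_max_left _ _, ?_⟩
  intro π hπ0 hπsum hπg
  have hstarpos : ∀ k, 0 < t k → 0 < πstar k := by
    intro k hk
    by_cases hkg : k = g
    · subst hkg; rw [hg]; exact hm0
    · rw [hl k hkg]; exact div_pos (mul_pos h1m hk) h1tg
  have hnex : ¬ ∃ k, 0 < t k ∧ πstar k = 0 := by
    rintro ⟨k, hk, hk0⟩; exact (hstarpos k hk).ne' hk0
  by_cases hex : ∃ k, 0 < t k ∧ π k = 0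
  · rw [mixObj, if_pos hex]; exact bot_le
  · rw [mixObj, mixObj, if_neg hex, if_neg hnex, EReal.coe_le_coe_iff]
    push_neg at hex
    have hπpos : ∀ k, 0 < t k → 0 < π k := by
      intro k hk
      rcases (hπ0 k).lt_or_eq with h | h
      · exact h
      · exact absurd h.symm (hex k hk)
    have hterm : ∀ k, t k * Real.log (π k) - t k * Real.log (πstar k)
        ≤ t k / πstar k * π k - t k := by
      intro k
      rcases (ht0 k).lt_or_eq with hk | hk
      · have hp := hπpos k hk
        have hs := hstarpos k hk
        have hlog : Real.log (π k) - Real.log (πstar k) ≤ π k / πstar k - 1 := by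
          rw [← Real.log_div hp.ne' hs.ne']
          exact Real.log_le_sub_one_of_pos (div_pos hp hs)
        calc t k * Real.log (π k) - t k * Real.log (πstar k)
            = t k * (Real.log (π k) - Real.log (πstar k)) := by ring
          _ ≤ t k * (π k / πstar k - 1) := mul_le_mul_of_nonneg_left hlog hk.le
          _ = t k / πstar k * π k - t k := by ring
      · simp [← hk]
    have hπerase : ∑ k ∈ Finset.univ.erase g, π k = 1 - π g := by
      have h := Finset.add_sum_erase Finset.univ π (Finset.mem_univ g)
      rw [hπsum] at h
      linarith
    have hsum1 : ∑ k, t k / πstar k * π k ≤ 1 := by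
      have hbd : ∀ k ∈ Finset.univ.erase g,
          t k / πstar k * π k ≤ (1 - t g) / (1 - m) * π k := by
        intro k hk
        have hkg := (Finset.mem_erase.1 hk).1
        rcases (ht0 k).lt_or_eq with htk | htk
        · rw [hl k hkg]
          have heq : t k / ((1 - m) * t k / (1 - t g)) = (1 - t g) / (1 - m) := by
            rw [div_div_eq_mul_div, div_eq_div_iff (by positivity) h1m.ne']
            ring
          rw [heq]
        · rw [← htk]
          simp only [zero_div, zero_mul]
          exact mul_nonneg (div_nonneg h1tg.le h1m.le) (hπ0 k)
      have hsplit := Finset.add_sum_erase Finset.univ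
        (fun k => t k / πstar k * π k) (Finset.mem_univ g)
      have herasebd : ∑ k ∈ Finset.univ.erase g, t k / πstar k * π k
          ≤ (1 - t g) / (1 - m) * (1 - π g) := by
        calc ∑ k ∈ Finset.univ.erase g, t k / πstar k * π k
            ≤ ∑ k ∈ Finset.univ.erase g, (1 - t g) / (1 - m) * π k :=
              Finset.sum_le_sum hbd
          _ = (1 - t g) / (1 - m) * (1 - π g) := by rw [← Finset.mul_sum, hπerase]
      have hkey : t g / m * π g + (1 - t g) / (1 - m) * (1 - π g) ≤ 1 := by
        rcases le_total α (t g) with h | h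
        · have hmeq : m = t g := max_eq_right h
          have htgpos : 0 < t g := lt_of_lt_of_le hα0' h
          rw [hmeq, div_self htgpos.ne']
          rw [div_self (by linarith : (1:ℝ) - t g ≠ 0)]
          linarith
        · have hmeq : m = α := max_eq_left h
          rw [hmeq]
          have h1α : (0:ℝ) < 1 - α := by linarith
          have heq : t g / α * π g + (1 - t g) / (1 - α) * (1 - π g)
              = (t g * π g * (1 - α) + (1 - t g) * (1 - π g) * α) / (α * (1 - α)) := by
            field_simp
          rw [heq, div_le_one (by positivity)]
          nlinarith [mul_nonneg (by linarith : (0:ℝ) ≤ π g - α) (by linarith : (0:ℝ) ≤ α - t g)]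
      calc ∑ k, t k / πstar k * π k
          = t g / πstar g * π g + ∑ k ∈ Finset.univ.erase g, t k / πstar k * π k := by
            rw [hsplit]
        _ ≤ t g / m * π g + (1 - t g) / (1 - m) * (1 - π g) := by
            rw [hg]; linarith [herasebd]
        _ ≤ 1 := hkey
    have hfinal := Finset.sum_le_sum (fun k (_ : k ∈ Finset.univ) => hterm k)
    rw [Finset.sum_sub_distrib, Finset.sum_sub_distrib, ht1] at hfinal
    linarith
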